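/- Let k ≥ 2 and let G_k be the graph on [k] × [k] obtained from the grid P_k □ P_k by adding the edges joining (0,j) to (k−1, k−j−1) and (j,0) to (k−j−1, k−1) for all j ∈ [k]. Then every odd cycle transversal of G_k has size at least k. -/

import Mathlib

/-- One-directional edge relation of the projective grid graph `G_k`. -/
def gkRel (k : ℕ) (u v : Fin k × Fin k) : Prop :=
  (u.1 = v.1 ∧ (u.2 : ℕ) + 1 = (v.2 : ℕ)) ∨
  (u.2 = v.2 ∧ (u.1 : ℕ) + 1 = (v.1 : ℕ)) ∨
  ((u.1 : ℕ) = 0 ∧ (v.1 : ℕ) = k - 1 ∧ (u.2 : ℕ) + (v.2 : ℕ) = k - 1) ∨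
  ((u.2 : ℕ) = 0 ∧ (v.2 : ℕ) = k - 1 ∧ (u.1 : ℕ) + (v.1 : ℕ) = k - 1)

/-- The projective quadrangulation `G_k`: the grid `P_k □ P_k` with added edges
`(0,j)–(k−1,k−j−1)` and `(j,0)–(k−j−1,k−1)`. -/
def Gk (k : ℕ) : SimpleGraph (Fin k × Fin k) where
  Adj u v := u ≠ v ∧ (gkRel k u v ∨ gkRel k v u)
  symm := by
    constructor
    intro u v h
    exact ⟨h.1.symm, h.2.symm⟩
  loopless := by
    constructor
    intro u h
    exact h.1 rfl

instance (k : ℕ) : DecidableRel (Gk k).Adj := by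
  intro u v
  unfold Gk gkRel
  infer_instance

theorem stmt_9 (k : ℕ) (hk : 2 ≤ k) (T : Finset (Fin k × Fin k))
    (hbip : ((Gk k).induce {v | v ∉ T}).Colorable 2) :
    k ≤ T.card := by
  classical
  by_contra hcon
  push_neg at hcon
  -- there is a column with no vertex of T
  have hfreecol : ∃ c : Fin k, ∀ i : Fin k, (i, c) ∉ T := by
    by_contra h
    push_neg at h
    choose f hf using h
    have hinj : (Finset.univ : Finset (Fin k)).card ≤ T.card := by
      apply Finset.card_le_card_of_injOn (fun c => (f c, c)) (fun c _ => hf c)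
      intro a _ b _ hab
      exact congrArg Prod.snd hab
    simp at hinj
    omega
  obtain ⟨c, hc⟩ := hfreecol
  obtain ⟨C⟩ := hbip
  -- the parity function
  set P : Fin k × Fin k → ZMod 2 := fun v =>
    (if h : v ∈ T then 0 else ((C ⟨v, h⟩).val : ZMod 2)) + ((v.1 : ℕ) : ZMod 2)
      + ((v.2 : ℕ) : ZMod 2) with hP
  have hPval : ∀ (v : Fin k × Fin k) (hv : v ∉ T),
      P v = ((C ⟨v, hv⟩).val : ZMod 2) + ((v.1 : ℕ) : ZMod 2) + ((v.2 : ℕ) : ZMod 2) := by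
    intro v hv
    simp only [hP]
    rw [dif_neg hv]
  have hcolor : ∀ (u v : Fin k × Fin k) (hu : u ∉ T) (hv : v ∉ T), (Gk k).Adj u v →
      ((C ⟨u, hu⟩).val : ZMod 2) + ((C ⟨v, hv⟩).val : ZMod 2) = 1 := by
    intro u v hu hv hadj
    have hne : C ⟨u, hu⟩ ≠ C ⟨v, hv⟩ := C.valid hadj
    revert hne
    generalize C ⟨u, hu⟩ = x
    generalize C ⟨v, hv⟩ = y
    revert x y
    decide
  -- step along a row
  have hrowstep : ∀ (i j j' : Fin k), (j : ℕ) + 1 = (j' : ℕ) →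
      (i, j) ∉ T → (i, j') ∉ T → P (i, j) = P (i, j') := by
    intro i j j' hjj hu hv
    have hne : ((i, j) : Fin k × Fin k) ≠ (i, j') := by
      intro h
      have h2 : (j : ℕ) = (j' : ℕ) := congrArg (fun p : Fin k × Fin k => (p.2 : ℕ)) h
      omega
    have hadj : (Gk k).Adj (i, j) (i, j') := ⟨hne, Or.inl (Or.inl ⟨rfl, hjj⟩)⟩
    have hs := hcolor _ _ hu hv hadj
    rw [hPval _ hu, hPval _ hv]
    have hcast : ((j' : ℕ) : ZMod 2) = ((j : ℕ) : ZMod 2) + 1 := by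
      rw [← hjj]; push_cast; ring
    rw [hcast]
    have he : ∀ x y a b : ZMod 2, x + y = 1 → x + a + b = y + a + (b + 1) := by decide
    exact he _ _ _ _ hs
  -- step along a column
  have hcolstep : ∀ (j i i' : Fin k), (i : ℕ) + 1 = (i' : ℕ) →
      (i, j) ∉ T → (i', j) ∉ T → P (i, j) = P (i', j) := by
    intro j i i' hii hu hv
    have hne : ((i, j) : Fin k × Fin k) ≠ (i', j) := by
      intro h
      have h2 : (i : ℕ) = (i' : ℕ) := congrArg (fun p : Fin k × Fin k => (p.1 : ℕ)) h
      omega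
    have hadj : (Gk k).Adj (i, j) (i', j) := ⟨hne, Or.inl (Or.inr (Or.inl ⟨rfl, hii⟩))⟩
    have hs := hcolor _ _ hu hv hadj
    rw [hPval _ hu, hPval _ hv]
    have hcast : ((i' : ℕ) : ZMod 2) = ((i : ℕ) : ZMod 2) + 1 := by
      rw [← hii]; push_cast; ring
    rw [hcast]
    have he : ∀ x y a b : ZMod 2, x + y = 1 → x + a + b = y + (a + 1) + b := by decide
    exact he _ _ _ _ hs
  -- segment along a row
  have hrowseg : ∀ (i : Fin k) (a b : ℕ), ∀ (ha : a < k) (hb : b < k), a ≤ b →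
      (∀ j : Fin k, a ≤ (j : ℕ) → (j : ℕ) ≤ b → (i, j) ∉ T) →
      P (i, ⟨a, ha⟩) = P (i, ⟨b, hb⟩) := by
    intro i a b
    induction b with
    | zero =>
        intro ha hb hab _
        have : a = 0 := Nat.le_zero.mp hab
        subst this
        rfl
    | succ n ih =>
        intro ha hb hab hfree
        rcases Nat.lt_or_ge a (n + 1) with h | h
        · have hn : n < k := by omega
          have h1 : P (i, ⟨a, ha⟩) = P (i, ⟨n, hn⟩) := by
            apply ih ha hn (by omega)
            intro j hj1 hj2
            exact hfree j hj1 (by omega)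
          have h2 : P (i, ⟨n, hn⟩) = P (i, ⟨n + 1, hb⟩) := by
            apply hrowstep i ⟨n, hn⟩ ⟨n + 1, hb⟩ rfl
            · exact hfree ⟨n, hn⟩ (Nat.lt_succ_iff.mp h) (Nat.le_succ n)
            · exact hfree ⟨n + 1, hb⟩ (le_of_lt h) (le_refl _)
          rw [h1, h2]
        · have : a = n + 1 := by omega
          subst this
          rfl
  -- segment along a column
  have hcolseg : ∀ (j : Fin k) (a b : ℕ), ∀ (ha : a < k) (hb : b < k), a ≤ b →
      (∀ i : Fin k, a ≤ (i : ℕ) → (i : ℕ) ≤ b → (i, j) ∉ T) →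
      P (⟨a, ha⟩, j) = P (⟨b, hb⟩, j) := by
    intro j a b
    induction b with
    | zero =>
        intro ha hb hab _
        have : a = 0 := Nat.le_zero.mp hab
        subst this
        rfl
    | succ n ih =>
        intro ha hb hab hfree
        rcases Nat.lt_or_ge a (n + 1) with h | h
        · have hn : n < k := by omega
          have h1 : P (⟨a, ha⟩, j) = P (⟨n, hn⟩, j) := by
            apply ih ha hn (by omega)
            intro i hi1 hi2
            exact hfree i hi1 (by omega)
          have h2 : P (⟨n, hn⟩, j) = P (⟨n + 1, hb⟩, j) := by
            apply hcolstep j ⟨n, hn⟩ ⟨n + 1, hb⟩ rfl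
            · exact hfree ⟨n, hn⟩ (Nat.lt_succ_iff.mp h) (Nat.le_succ n)
            · exact hfree ⟨n + 1, hb⟩ (le_of_lt h) (le_refl _)
          rw [h1, h2]
        · have : a = n + 1 := by omega
          subst this
          rfl
  have h0k : (0 : ℕ) < k := by omega
  have hk1 : k - 1 < k := by omega
  -- key step: each row index forces a T-vertex in a private zone
  have key : ∀ i : Fin k, ∃ v : Fin k × Fin k, v ∈ T ∧
      (((v.1 : ℕ) = (i : ℕ) ∧ (v.2 : ℕ) ≤ (c : ℕ)) ∨
       ((v.1 : ℕ) = k - 1 - (i : ℕ) ∧ (c : ℕ) ≤ (v.2 : ℕ))) := by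
    intro i
    by_contra hno
    push_neg at hno
    have hilt : (i : ℕ) < k := i.isLt
    set i' : Fin k := ⟨k - 1 - (i : ℕ), by omega⟩ with hi'
    -- freeness of the needed segments
    have hfree1 : ∀ j : Fin k, (j : ℕ) ≤ (c : ℕ) → (i, j) ∉ T := by
      intro j hj hmem
      have hlt : (c : ℕ) < (j : ℕ) := (hno (i, j) hmem).1 rfl
      omega
    have hfree2 : ∀ j : Fin k, (c : ℕ) ≤ (j : ℕ) → (i', j) ∉ T := by
      intro j hj hmem
      have hlt : (j : ℕ) < (c : ℕ) := (hno (i', j) hmem).2 rfl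
      omega
    -- the walk
    have e1 : P (i, ⟨0, h0k⟩) = P (i, c) :=
      hrowseg i 0 (c : ℕ) h0k c.isLt (Nat.zero_le _)
        (fun j _ hj => hfree1 j hj)
    have e2 : P (i, c) = P (i', c) := by
      rcases le_total (i : ℕ) (k - 1 - (i : ℕ)) with h | h
      · exact hcolseg c (i : ℕ) (k - 1 - (i : ℕ)) i.isLt i'.isLt h (fun i0 _ _ => hc i0)
      · exact (hcolseg c (k - 1 - (i : ℕ)) (i : ℕ) i'.isLt i.isLt h (fun i0 _ _ => hc i0)).symm
    have e3 : P (i', c) = P (i', ⟨k - 1, hk1⟩) :=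
      hrowseg i' (c : ℕ) (k - 1) c.isLt hk1 (by have := c.isLt; omega)
        (fun j hj _ => hfree2 j hj)
    have hchain : P (i, ⟨0, h0k⟩) = P (i', ⟨k - 1, hk1⟩) := e1.trans (e2.trans e3)
    -- endpoints are not in T
    have hu0 : ((i, (⟨0, h0k⟩ : Fin k)) : Fin k × Fin k) ∉ T :=
      hfree1 ⟨0, h0k⟩ (Nat.zero_le _)
    have hvk : ((i', (⟨k - 1, hk1⟩ : Fin k)) : Fin k × Fin k) ∉ T :=
      hfree2 ⟨k - 1, hk1⟩ (show (c : ℕ) ≤ k - 1 by have := c.isLt; omega)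
    -- the cross edge
    have hne : ((i, (⟨0, h0k⟩ : Fin k)) : Fin k × Fin k) ≠ (i', ⟨k - 1, hk1⟩) := by
      intro h
      have h2 : (0 : ℕ) = k - 1 := congrArg (fun p : Fin k × Fin k => (p.2 : ℕ)) h
      omega
    have hadj : (Gk k).Adj (i, ⟨0, h0k⟩) (i', ⟨k - 1, hk1⟩) :=
      ⟨hne, Or.inl (Or.inr (Or.inr (Or.inr
        ⟨rfl, rfl, show (i : ℕ) + (k - 1 - (i : ℕ)) = k - 1 by omega⟩)))⟩
    have hs := hcolor _ _ hu0 hvk hadj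
    rw [hPval _ hu0, hPval _ hvk] at hchain
    have hchain' : ((C ⟨(i, ⟨0, h0k⟩), hu0⟩).val : ZMod 2) + ((i : ℕ) : ZMod 2)
        + (((0 : ℕ) : ℕ) : ZMod 2)
        = ((C ⟨(i', ⟨k - 1, hk1⟩), hvk⟩).val : ZMod 2) + (((k - 1 - (i : ℕ) : ℕ)) : ZMod 2)
        + (((k - 1 : ℕ)) : ZMod 2) := hchain
    have hsub : (((k - 1 - (i : ℕ) : ℕ)) : ZMod 2)
        = (((k - 1 : ℕ)) : ZMod 2) - ((i : ℕ) : ZMod 2) :=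
      Nat.cast_sub (by omega)
    rw [hsub] at hchain'
    have hlast : ∀ x y a n : ZMod 2, x + y = 1 →
        x + a + (((0 : ℕ) : ℕ) : ZMod 2) = y + (n - a) + n → False := by decide
    exact hlast _ _ _ _ hs hchain'
  -- conclude by injectivity
  choose g hg using key
  have hinj : (Finset.univ : Finset (Fin k)).card ≤ T.card := by
    apply Finset.card_le_card_of_injOn g (fun i _ => (hg i).1)
    intro a _ b _ hab
    have ha' := (hg a).2
    rw [hab] at ha'
    have hb' := (hg b).2
    have halt : (a : ℕ) < k := a.isLt
    have hblt : (b : ℕ) < k := b.isLt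
    rcases ha' with ⟨ha1, ha2⟩ | ⟨ha1, ha2⟩ <;> rcases hb' with ⟨hb1, hb2⟩ | ⟨hb1, hb2⟩
    · exact Fin.ext (by omega)
    · exfalso
      have h2 : (g b).2 = c := Fin.ext (by omega)
      have hmem := (hg b).1
      have : ((g b).1, c) ∈ T := by rw [← h2]; exact hmem
      exact hc (g b).1 this
    · exfalso
      have h2 : (g b).2 = c := Fin.ext (by omega)
      have hmem := (hg b).1
      have : ((g b).1, c) ∈ T := by rw [← h2]; exact hmem
      exact hc (g b).1 this
    · exact Fin.ext (by omega)
  simp at hinj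
  omega
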